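/- Let Y be a normed vector space and A a nonempty closed convex subset with bar(A) ≠ {0} (equivalently A ≠ Y). Set C := { y* − inf_{x∈A} y*(x) : y* ∈ S_{Y*} ∩ (−bar(A)) }, a family of real-valued affine continuous functions on Y. Then A = [C]^× = { y ∈ Y : y*(y) − inf_{x∈A} y*(x) ≥ 0 for all y* ∈ S_{Y*} ∩ (−bar(A)) }; in particular A is weak-admissible at each of its points, determined by C. Moreover, if 0 ∉ the weak-star closed convex hull of S_{Y*} ∩ (−bar(A)) then A is admissible at each of its points, determined by C; this holds in particular whenever int(R_A) ≠ ∅, and if A ≠ Y is a closed convex cone with int(A) ≠ ∅ then A = [S_{Y*} ∩ A*]^× is admissible determined by C = S_{Y*} ∩ A*. -/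

import Mathlib

open Topology Filter Set

noncomputable section

section Defs

variable {E : Type*} [AddCommGroup E] [Module ℝ E] [TopologicalSpace E]

/-- The canonical map from the topological dual of `E` to the weak-star dual. -/
def toWD (φ : E →L[ℝ] ℝ) : WeakDual ℝ E := φ

/-- The weak-star closed convex hull of a set of continuous linear functionals. -/
def wcch (B : Set (E →L[ℝ] ℝ)) : Set (WeakDual ℝ E) :=
  closure (convexHull ℝ (toWD '' B))

/-- `f` is Gateaux differentiable at `x` with Gateaux-differential `f'`. -/
def HasGateauxAt (f : E → ℝ) (f' : E →L[ℝ] ℝ) (x : E) : Prop :=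
  ∀ v : E, Tendsto (fun t : ℝ => (f (x + t • v) - f x - t * f' v) / t) (𝓝[>] 0) (𝓝 0)

/-- The family `C` is equi-Gateaux differentiable at `x`, with differentials given by `D`. -/
def EquiGateauxAt (C : Set (E → ℝ)) (D : (E → ℝ) → E →L[ℝ] ℝ) (x : E) : Prop :=
  (∀ φ ∈ C, HasGateauxAt φ (D φ) x) ∧
  ∀ v : E, ∀ ε : ℝ, 0 < ε → ∃ δ : ℝ, 0 < δ ∧ ∀ t : ℝ, 0 < t → t < δ →
    ∀ φ ∈ C, |(φ (x + t • v) - φ x - t * (D φ) v) / t| ≤ ε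

/-- The family `C` is equi-lower semicontinuous at `x`. -/
def EquiLscAt (C : Set (E → ℝ)) (x : E) : Prop :=
  ∀ ε : ℝ, 0 < ε → ∃ O ∈ 𝓝 x, ∀ y ∈ O, ∀ φ ∈ C, φ y - φ x > -ε

/-- `[C]^× = {x ∈ E : φ(x) ≥ 0 for all φ ∈ C}`. -/
def polarSet (C : Set (E → ℝ)) : Set E := {x | ∀ φ ∈ C, 0 ≤ φ x}

/-- The multiplier set `T_C(x̂)`. -/
def multSet (C : Set (E → ℝ)) (D : (E → ℝ) → E →L[ℝ] ℝ) (x : E) : Set (WeakDual ℝ E) :=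
  ⋂ n ∈ {n : ℕ | 1 ≤ n}, wcch (D '' {φ | φ ∈ C ∧ φ x ∈ Icc (0:ℝ) (1/(n:ℝ))})

/-- `F` is weak-admissible at `x ∈ F`, determined by `C` (with differentials `D`). -/
def WeakAdmissibleAt (F : Set E) (C : Set (E → ℝ)) (D : (E → ℝ) → E →L[ℝ] ℝ) (x : E) : Prop :=
  x ∈ F ∧ C.Nonempty ∧ F = polarSet C ∧ EquiGateauxAt C D x ∧
    ({φ | φ ∈ C ∧ φ x ≠ 0} = ∅ ∨ EquiLscAt {φ | φ ∈ C ∧ φ x ≠ 0} x) ∧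
    IsCompact (wcch (D '' C))

end Defs

section NormedDefs

variable {Y : Type*} [NormedAddCommGroup Y] [NormedSpace ℝ Y]

/-- `A` is admissible at `x ∈ A`, determined by `C` (with differentials `D`). -/
def AdmissibleAt (A : Set Y) (C : Set (Y → ℝ)) (D : (Y → ℝ) → Y →L[ℝ] ℝ) (x : Y) : Prop :=
  x ∈ A ∧ C.Nonempty ∧ A = polarSet C ∧ EquiGateauxAt C D x ∧
    (∃ r : NNReal, ∃ ε : ℝ, 0 < ε ∧ ∀ φ ∈ C, LipschitzOnWith r φ (Metric.ball x ε)) ∧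
    toWD (0 : Y →L[ℝ] ℝ) ∉ wcch (D '' C)

/-- The recession cone of a set. -/
def recCone (K : Set Y) : Set Y := {v | ∀ l : ℝ, 0 < l → ∀ x ∈ K, x + l • v ∈ K}

/-- The barrier cone of `K`: functionals bounded above on `K`. -/
def barCone (K : Set Y) : Set (Y →L[ℝ] ℝ) := {φ | BddAbove (φ '' K)}

/-- The dual positive cone `A*`. -/
def posDualCone (A : Set Y) : Set (Y →L[ℝ] ℝ) := {φ | ∀ y ∈ A, 0 ≤ φ y}

end NormedDefs

section Stmt5

variable {Y : Type*} [NormedAddCommGroup Y] [NormedSpace ℝ Y]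

/-- The determining family `C = {y* − inf_{x∈A} y*(x) : y* ∈ S_{Y*} ∩ (−bar(A))}`. -/
def detFam (A : Set Y) : Set (Y → ℝ) :=
  (fun φ : Y →L[ℝ] ℝ => fun y => φ y - sInf (φ '' A)) ''
    {φ : Y →L[ℝ] ℝ | ‖φ‖ = 1 ∧ -φ ∈ barCone A}

/-- The determining family `C = S_{Y*} ∩ A*` for a closed convex cone `A`. -/
def coneFam (A : Set Y) : Set (Y → ℝ) :=
  (fun φ : Y →L[ℝ] ℝ => (φ : Y → ℝ)) '' {φ : Y →L[ℝ] ℝ | ‖φ‖ = 1 ∧ φ ∈ posDualCone A}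

section Stmt5Aux

variable {Y : Type*} [NormedAddCommGroup Y] [NormedSpace ℝ Y]

open Classical in
/-- Canonical differential assignment for affine families. -/
def Dmap (A : Set Y) : (Y → ℝ) → Y →L[ℝ] ℝ := fun φ =>
  if h : ∃ ψ : Y →L[ℝ] ℝ, (fun y => ψ y - sInf (ψ '' A)) = φ then h.choose else 0

lemma Dmap_spec (A : Set Y) (ψ : Y →L[ℝ] ℝ) :
    Dmap A (fun y => ψ y - sInf (ψ '' A)) = ψ := by
  have h : ∃ ψ' : Y →L[ℝ] ℝ,
      (fun y => ψ' y - sInf (ψ' '' A)) = (fun y => ψ y - sInf (ψ '' A)) := ⟨ψ, rfl⟩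
  rw [Dmap]
  rw [dif_pos h]
  have hc := h.choose_spec
  have h0 := congrFun hc 0
  simp only [map_zero, zero_sub, neg_inj] at h0
  ext y
  have hy := congrFun hc y
  rw [h0] at hy
  linarith

lemma Dmap_image (A : Set Y) :
    Dmap A '' detFam A = {ψ : Y →L[ℝ] ℝ | ‖ψ‖ = 1 ∧ -ψ ∈ barCone A} := by
  unfold detFam
  rw [Set.image_image]
  rw [Set.image_congr (fun ψ _ => Dmap_spec A ψ)]
  exact Set.image_id _

lemma bddBelow_of_neg_barCone (A : Set Y) {ψ : Y →L[ℝ] ℝ} (h : -ψ ∈ barCone A) :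
    BddBelow (ψ '' A) := by
  obtain ⟨M, hM⟩ := h
  refine ⟨-M, ?_⟩
  rintro _ ⟨x, hx, rfl⟩
  have h2 := hM (Set.mem_image_of_mem (-ψ) hx)
  simp only [ContinuousLinearMap.neg_apply] at h2
  linarith

lemma polar_eq_detFam (A : Set Y) (hne : A.Nonempty) (hcl : IsClosed A) (hconv : Convex ℝ A) :
    A = polarSet (detFam A) := by
  ext y
  constructor
  · intro hy φ hφ
    obtain ⟨ψ, ⟨hψn, hψb⟩, rfl⟩ := hφ
    have h1 : sInf (ψ '' A) ≤ ψ y :=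
      csInf_le (bddBelow_of_neg_barCone A hψb) (Set.mem_image_of_mem ψ hy)
    simp only
    linarith
  · intro hy
    by_contra hyA
    obtain ⟨f, u, hfy, hfA⟩ := geometric_hahn_banach_point_closed hconv hcl hyA
    have hf0 : f ≠ 0 := by
      rintro rfl
      obtain ⟨x, hx⟩ := hne
      have h1 := hfA x hx
      simp only [ContinuousLinearMap.zero_apply] at h1 hfy
      linarith
    have hfn : ‖f‖ ≠ 0 := norm_ne_zero_iff.mpr hf0
    have hfpos : (0:ℝ) < ‖f‖⁻¹ := by positivity
    set ψ : Y →L[ℝ] ℝ := ‖f‖⁻¹ • f with hψdef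
    have happ : ∀ z, ψ z = ‖f‖⁻¹ * f z := fun z => rfl
    have hψn : ‖ψ‖ = 1 := by
      have h5 := norm_smul (‖f‖⁻¹) f
      rw [hψdef, h5, norm_inv, norm_norm, inv_mul_cancel₀ hfn]
    have hlb : ∀ x ∈ A, ‖f‖⁻¹ * u ≤ ψ x := by
      intro x hx
      rw [happ]
      exact mul_le_mul_of_nonneg_left (hfA x hx).le hfpos.le
    have hψb : -ψ ∈ barCone A := by
      refine ⟨-(‖f‖⁻¹ * u), ?_⟩
      rintro _ ⟨x, hx, rfl⟩
      simp only [ContinuousLinearMap.neg_apply]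
      linarith [hlb x hx]
    have hmem : (fun z => ψ z - sInf (ψ '' A)) ∈ detFam A := ⟨ψ, ⟨hψn, hψb⟩, rfl⟩
    have h1 := hy _ hmem
    have h2 : ‖f‖⁻¹ * u ≤ sInf (ψ '' A) :=
      le_csInf (hne.image ψ) (by rintro _ ⟨x, hx, rfl⟩; exact hlb x hx)
    have h3 : ψ y < ‖f‖⁻¹ * u := by
      rw [happ]; exact mul_lt_mul_of_pos_left hfy hfpos
    linarith

lemma detFam_nonempty (A : Set Y) (hne : A.Nonempty) (hbar : barCone A ≠ {0}) :
    (detFam A).Nonempty := by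
  have h0 : (0 : Y →L[ℝ] ℝ) ∈ barCone A := by
    refine ⟨0, ?_⟩
    rintro _ ⟨x, hx, rfl⟩
    simp
  have hex : ∃ f ∈ barCone A, f ≠ 0 := by
    by_contra h
    push_neg at h
    apply hbar
    ext g
    simp only [Set.mem_singleton_iff]
    exact ⟨fun hg => h g hg, fun hg => hg ▸ h0⟩
  obtain ⟨f, ⟨M, hM⟩, hf0⟩ := hex
  have hfn : ‖f‖ ≠ 0 := norm_ne_zero_iff.mpr hf0
  have hfpos : (0:ℝ) < ‖f‖⁻¹ := by positivity
  set ψ : Y →L[ℝ] ℝ := -(‖f‖⁻¹ • f) with hψdef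
  have hψn : ‖ψ‖ = 1 := by
    have h5 := norm_smul (‖f‖⁻¹) f
    rw [hψdef, norm_neg, h5, norm_inv, norm_norm, inv_mul_cancel₀ hfn]
  have hψb : -ψ ∈ barCone A := by
    refine ⟨‖f‖⁻¹ * M, ?_⟩
    rintro _ ⟨x, hx, rfl⟩
    have h1 : f x ≤ M := hM (Set.mem_image_of_mem f hx)
    have : (-ψ) x = ‖f‖⁻¹ * f x := by simp [hψdef]
    rw [this]
    exact mul_le_mul_of_nonneg_left h1 hfpos.le
  exact ⟨_, ⟨ψ, ⟨hψn, hψb⟩, rfl⟩⟩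

lemma detFam_affine (A : Set Y) {φ : Y → ℝ} (hφ : φ ∈ detFam A) (z v : Y) (t : ℝ) :
    φ (z + t • v) - φ z - t * (Dmap A φ) v = 0 := by
  obtain ⟨ψ, _, rfl⟩ := hφ
  rw [Dmap_spec]
  simp only [map_add, map_smul, smul_eq_mul]
  ring

lemma equiGateaux_detFam (A : Set Y) (x : Y) : EquiGateauxAt (detFam A) (Dmap A) x := by
  constructor
  · intro φ hφ v
    have heq : (fun t : ℝ => (φ (x + t • v) - φ x - t * (Dmap A φ) v) / t)
        = fun _ : ℝ => (0:ℝ) := by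
      funext t
      rw [detFam_affine A hφ x v t, zero_div]
    rw [heq]
    exact tendsto_const_nhds
  · intro v ε hε
    refine ⟨1, one_pos, fun t _ _ φ hφ => ?_⟩
    rw [detFam_affine A hφ x v t, zero_div, abs_zero]
    exact hε.le

lemma detFam_lipschitz (A : Set Y) {φ : Y → ℝ} (hφ : φ ∈ detFam A) : LipschitzWith 1 φ := by
  obtain ⟨ψ, ⟨hψn, _⟩, rfl⟩ := hφ
  have h1 : LipschitzWith ‖ψ‖₊ ψ := ψ.lipschitz
  have h2 : (‖ψ‖₊ : NNReal) = 1 := by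
    ext
    simp [coe_nnnorm, hψn]
  rw [h2] at h1
  refine LipschitzWith.of_dist_le_mul fun a b => ?_
  have := h1.dist_le_mul a b
  simpa [Real.dist_eq, sub_sub_sub_cancel_right] using this

lemma equiLsc_detFam (A : Set Y) (x : Y) :
    EquiLscAt {φ | φ ∈ detFam A ∧ φ x ≠ 0} x := by
  intro ε hε
  refine ⟨Metric.ball x ε, Metric.ball_mem_nhds x hε, ?_⟩
  rintro y hy φ ⟨hφ, -⟩
  have h1 := (detFam_lipschitz A hφ).dist_le_mul y x
  rw [Real.dist_eq] at h1
  have hd : dist y x < ε := Metric.mem_ball.mp hy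
  have h2 : |φ y - φ x| < ε := by
    calc |φ y - φ x| ≤ 1 * dist y x := h1
    _ < ε := by linarith
  linarith [neg_lt_of_abs_lt h2]

lemma wcch_compact_of_bounded (B : Set (Y →L[ℝ] ℝ)) (hB : ∀ ψ ∈ B, ‖ψ‖ ≤ 1) :
    IsCompact (wcch B) := by
  set K : Set (WeakDual ℝ Y) := WeakDual.toStrongDual ⁻¹' Metric.closedBall 0 1 with hK
  have hKc : IsCompact K := WeakDual.isCompact_closedBall 0 1
  have hKcl : IsClosed K := WeakDual.isClosed_closedBall 0 1
  have hKconv : Convex ℝ K :=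
    (convex_closedBall (0 : StrongDual ℝ Y) 1).linear_preimage
      (WeakDual.toStrongDual (𝕜 := ℝ) (E := Y)).toLinearMap
  have hsub : toWD '' B ⊆ K := by
    rintro _ ⟨ψ, hψ, rfl⟩
    simp only [hK, Set.mem_preimage, Metric.mem_closedBall, dist_zero_right]
    exact hB ψ hψ
  exact hKc.of_isClosed_subset isClosed_closure
    (closure_minimal (convexHull_min hsub hKconv) hKcl)

lemma psi_nonneg_recCone (A : Set Y) (hne : A.Nonempty) {ψ : Y →L[ℝ] ℝ}
    (hψb : -ψ ∈ barCone A) {w : Y} (hw : w ∈ recCone A) : 0 ≤ ψ w := by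
  by_contra hneg
  push_neg at hneg
  obtain ⟨M, hM⟩ := hψb
  obtain ⟨x, hx⟩ := hne
  set l : ℝ := (M + |ψ x| + 1) / (-ψ w) with hl
  have hden : (0:ℝ) < -ψ w := by linarith
  have hnum : (0:ℝ) < M + |ψ x| + 1 := by
    have h1 : -ψ x ≤ M := by
      have := hM (Set.mem_image_of_mem (-ψ) hx)
      simpa using this
    have h2 := le_abs_self (ψ x)
    linarith
  have hlpos : 0 < l := div_pos hnum hden
  have hmem : x + l • w ∈ A := hw l hlpos x hx
  have hbd := hM (Set.mem_image_of_mem (-ψ) hmem)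
  simp only [ContinuousLinearMap.neg_apply, map_add, map_smul, smul_eq_mul] at hbd
  have hlw : l * (-ψ w) = M + |ψ x| + 1 := by
    rw [hl]
    exact div_mul_cancel₀ _ hden.ne'
  have habs := le_abs_self (ψ x)
  nlinarith [hbd, hlw]

lemma hkey_psi_v (A : Set Y) (hne : A.Nonempty) {v : Y} {r : ℝ} (hr : 0 < r)
    (hball : Metric.ball v r ⊆ recCone A) {ψ : Y →L[ℝ] ℝ}
    (hψn : ‖ψ‖ = 1) (hψb : -ψ ∈ barCone A) : r ≤ ψ v := by
  have hv : v ∈ recCone A := hball (Metric.mem_ball_self hr)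
  have hv0 : 0 ≤ ψ v := psi_nonneg_recCone A hne hψb hv
  refine le_of_forall_lt fun s hs => ?_
  rcases lt_or_ge s 0 with hneg | hpos
  · linarith
  · -- 0 ≤ s < r
    have hsr : s / r < 1 := (div_lt_one hr).mpr hs
    have hex : ∃ x : Y, s / r * ‖x‖ < ‖ψ x‖ := by
      by_contra h
      push_neg at h
      have : ‖ψ‖ ≤ s / r := ψ.opNorm_le_bound (by positivity) h
      linarith [hψn ▸ this]
    obtain ⟨x, hx⟩ := hex
    have hx0 : x ≠ 0 := by
      rintro rfl
      simp at hx
    have hxn : (0:ℝ) < ‖x‖ := norm_pos_iff.mpr hx0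
    set w : Y := if 0 ≤ ψ x then ‖x‖⁻¹ • x else -(‖x‖⁻¹ • x) with hw
    have hwn : ‖w‖ = 1 := by
      rw [hw]
      split_ifs <;> simp [norm_smul, abs_of_nonneg (inv_nonneg.mpr hxn.le),
        inv_mul_cancel₀ hxn.ne']
    have hψw : ψ w = ‖ψ x‖ / ‖x‖ := by
      rw [hw]
      split_ifs with h
      · simp [map_smul, Real.norm_eq_abs, abs_of_nonneg h, div_eq_inv_mul]
      · push_neg at h
        simp [map_smul, Real.norm_eq_abs, abs_of_neg h, div_eq_inv_mul]
    have hψwpos : s / r < ψ w := by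
      rw [hψw, lt_div_iff₀ hxn]
      exact hx
    have hψwpos' : 0 < ψ w := lt_of_le_of_lt (by positivity) hψwpos
    have h6 : s < ψ w * r := (div_lt_iff₀ hr).mp hψwpos
    have hsw : s / ψ w < r := by
      rw [div_lt_iff₀ hψwpos']
      linarith
    set c : ℝ := (s / ψ w + r) / 2 with hc
    have hc1 : s / ψ w < c := by
      rw [hc]; linarith
    have hc2 : c < r := by rw [hc]; linarith
    have hc0 : 0 < c := by
      have : 0 ≤ s / ψ w := div_nonneg hpos hψwpos'.le
      rw [hc]; linarith
    have hmem : v - c • w ∈ recCone A := by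
      apply hball
      rw [Metric.mem_ball]
      have : dist (v - c • w) v = c := by
        rw [dist_eq_norm]
        simp [norm_smul, abs_of_pos hc0, hwn]
      rw [this]; exact hc2
    have h0 : 0 ≤ ψ (v - c • w) := psi_nonneg_recCone A hne hψb hmem
    simp only [map_sub, map_smul, smul_eq_mul] at h0
    have h7 : s < c * ψ w := (div_lt_iff₀ hψwpos').mp hc1
    linarith

lemma zero_not_mem_wcch (A : Set Y) (hne : A.Nonempty)
    (hint : (interior (recCone A)).Nonempty) :
    toWD (0 : Y →L[ℝ] ℝ) ∉ wcch {ψ : Y →L[ℝ] ℝ | ‖ψ‖ = 1 ∧ -ψ ∈ barCone A} := by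
  obtain ⟨v, hv⟩ := hint
  obtain ⟨r, hr, hball⟩ := Metric.isOpen_iff.mp isOpen_interior v hv
  have hball' : Metric.ball v r ⊆ recCone A := hball.trans interior_subset
  set H : Set (WeakDual ℝ Y) := {ξ | r ≤ ξ v} with hH
  have hHcl : IsClosed H := isClosed_le continuous_const (WeakDual.eval_continuous v)
  have hHcv : Convex ℝ H := by
    intro a ha b hb s t hs ht hst
    simp only [hH, Set.mem_setOf_eq] at ha hb ⊢
    have heval : (s • a + t • b) v = s * a v + t * b v := rfl
    rw [heval]
    nlinarith
  have hsub : wcch {ψ : Y →L[ℝ] ℝ | ‖ψ‖ = 1 ∧ -ψ ∈ barCone A} ⊆ H := by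
    refine closure_minimal (convexHull_min ?_ hHcv) hHcl
    rintro _ ⟨ψ, ⟨hψn, hψb⟩, rfl⟩
    exact hkey_psi_v A hne hr hball' hψn hψb
  intro h0
  have := hsub h0
  simp only [hH, Set.mem_setOf_eq] at this
  have hzero : (toWD (0 : Y →L[ℝ] ℝ)) v = 0 := rfl
  rw [hzero] at this
  linarith

end Stmt5Aux

/-- A nonempty closed convex set `A` with `bar(A) ≠ {0}` satisfies
`A = [C]^×` for `C = {y* − inf_A y* : y* ∈ S_{Y*} ∩ (−bar(A))}` and is weak-admissible at
each of its points, determined by `C`; it is admissible whenever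
`0 ∉ w*-closed convex hull of S_{Y*} ∩ (−bar(A))`, in particular whenever `int(R_A) ≠ ∅`;
and a closed convex cone `A ≠ Y` with `int(A) ≠ ∅` satisfies `A = [S_{Y*} ∩ A*]^×` and is
admissible determined by `S_{Y*} ∩ A*`. -/
theorem closed_convex_weak_admissible
    (A : Set Y) (hne : A.Nonempty) (hcl : IsClosed A) (hconv : Convex ℝ A)
    (hbar : barCone A ≠ {0}) :
    (A = polarSet (detFam A)) ∧
    (∃ D : (Y → ℝ) → Y →L[ℝ] ℝ, ∀ xh ∈ A, WeakAdmissibleAt A (detFam A) D xh) ∧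
    (toWD (0 : Y →L[ℝ] ℝ) ∉ wcch {φ : Y →L[ℝ] ℝ | ‖φ‖ = 1 ∧ -φ ∈ barCone A} →
      ∃ D : (Y → ℝ) → Y →L[ℝ] ℝ, ∀ xh ∈ A, AdmissibleAt A (detFam A) D xh) ∧
    ((interior (recCone A)).Nonempty →
      ∃ D : (Y → ℝ) → Y →L[ℝ] ℝ, ∀ xh ∈ A, AdmissibleAt A (detFam A) D xh) ∧
    ((∀ c : ℝ, 0 < c → ∀ x ∈ A, c • x ∈ A) → (interior A).Nonempty →
      (A = polarSet (coneFam A)) ∧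
      ∃ D : (Y → ℝ) → Y →L[ℝ] ℝ, ∀ xh ∈ A, AdmissibleAt A (coneFam A) D xh) := by
  have hpolar : A = polarSet (detFam A) := polar_eq_detFam A hne hcl hconv
  have hCne : (detFam A).Nonempty := detFam_nonempty A hne hbar
  have hDsub : ∀ ψ ∈ Dmap A '' detFam A, ‖ψ‖ ≤ 1 := by
    rw [Dmap_image]
    rintro ψ ⟨h1, -⟩
    exact h1.le
  have hcompact : IsCompact (wcch (Dmap A '' detFam A)) := wcch_compact_of_bounded _ hDsub
  have hweak : ∀ xh ∈ A, WeakAdmissibleAt A (detFam A) (Dmap A) xh := fun xh hx =>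
    ⟨hx, hCne, hpolar, equiGateaux_detFam A xh, Or.inr (equiLsc_detFam A xh), hcompact⟩
  have hadm : toWD (0 : Y →L[ℝ] ℝ) ∉ wcch {φ : Y →L[ℝ] ℝ | ‖φ‖ = 1 ∧ -φ ∈ barCone A} →
      ∀ xh ∈ A, AdmissibleAt A (detFam A) (Dmap A) xh := by
    intro h0 xh hx
    refine ⟨hx, hCne, hpolar, equiGateaux_detFam A xh,
      ⟨1, 1, one_pos, fun φ hφ => (detFam_lipschitz A hφ).lipschitzOnWith⟩, ?_⟩
    rw [Dmap_image]
    exact h0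
  refine ⟨hpolar, ⟨Dmap A, hweak⟩, fun h0 => ⟨Dmap A, hadm h0⟩,
    fun hint => ⟨Dmap A, hadm (zero_not_mem_wcch A hne hint)⟩, ?_⟩
  intro hcone hintA
  have h0A : (0:Y) ∈ A := by
    obtain ⟨x, hx⟩ := hne
    have htend : Tendsto (fun c : ℝ => c • x) (𝓝[>] 0) (𝓝 (0:Y)) := by
      have h1 : Tendsto (fun c : ℝ => c • x) (𝓝 0) (𝓝 ((0:ℝ) • x)) :=
        (continuous_id.smul continuous_const).tendsto 0
      simpa using h1.mono_left nhdsWithin_le_nhds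
    exact hcl.mem_of_tendsto htend
      (eventually_nhdsWithin_of_forall fun c hc => hcone c hc x hx)
  have hpos_iff : ∀ ψ : Y →L[ℝ] ℝ, (-ψ ∈ barCone A ↔ ψ ∈ posDualCone A) := by
    intro ψ
    constructor
    · rintro ⟨M, hM⟩ y hy
      by_contra hneg
      push_neg at hneg
      have hden : 0 < -ψ y := by linarith
      have hM0 : 0 ≤ M := by
        have h1 := hM (Set.mem_image_of_mem (-ψ) h0A)
        simpa using h1
      set c : ℝ := (M + 1) / (-ψ y) with hc
      have hcpos : 0 < c := div_pos (by linarith) hden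
      have h2 := hM (Set.mem_image_of_mem (-ψ) (hcone c hcpos y hy))
      simp only [ContinuousLinearMap.neg_apply, map_smul, smul_eq_mul] at h2
      have h3 : c * (-ψ y) = M + 1 := by
        rw [hc]
        exact div_mul_cancel₀ _ hden.ne'
      nlinarith
    · intro hψ
      refine ⟨0, ?_⟩
      rintro _ ⟨y, hy, rfl⟩
      simp only [ContinuousLinearMap.neg_apply]
      linarith [hψ y hy]
  have hsinf : ∀ ψ : Y →L[ℝ] ℝ, ψ ∈ posDualCone A → sInf (ψ '' A) = 0 := by
    intro ψ hψ
    apply le_antisymm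
    · exact csInf_le ⟨0, by rintro _ ⟨y, hy, rfl⟩; exact hψ y hy⟩
        ⟨0, h0A, map_zero ψ⟩
    · exact le_csInf (hne.image ψ) (by rintro _ ⟨y, hy, rfl⟩; exact hψ y hy)
  have hfams : detFam A = coneFam A := by
    unfold detFam coneFam
    have hsets : {φ : Y →L[ℝ] ℝ | ‖φ‖ = 1 ∧ -φ ∈ barCone A}
        = {φ : Y →L[ℝ] ℝ | ‖φ‖ = 1 ∧ φ ∈ posDualCone A} := by
      ext φ
      simp only [Set.mem_setOf_eq, hpos_iff φ]
    rw [hsets]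
    apply Set.image_congr
    intro ψ hψ
    funext y
    rw [hsinf ψ hψ.2]
    simp
  have hrec : (interior (recCone A)).Nonempty := by
    obtain ⟨v, hv⟩ := hintA
    refine ⟨v, interior_mono ?_ hv⟩
    intro w hw l hl x hx
    have h1 : l • w ∈ A := hcone l hl w hw
    have h2 : (1/2 : ℝ) • x + (1/2 : ℝ) • (l • w) ∈ A :=
      hconv hx h1 (by norm_num) (by norm_num) (by norm_num)
    have h3 := hcone 2 (by norm_num) _ h2
    have h4 : (2:ℝ) • ((1/2 : ℝ) • x + (1/2 : ℝ) • (l • w)) = x + l • w := by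
      rw [smul_add, smul_smul, smul_smul]
      norm_num
    rwa [h4] at h3
  constructor
  · rw [← hfams]
    exact hpolar
  · exact ⟨Dmap A, by rw [← hfams]; exact hadm (zero_not_mem_wcch A hne hrec)⟩

end Stmt5
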